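/- Let M_q(n) be the standard quantized matrix algebra over K with n ≥ 2 and q ≠ 0, and assume the ordered monomials {z^α : α ∈ ℕ^{I(n)}} form a K-basis of M_q(n). Then the lexicographic order ≺ satisfies condition (3) of the definition of a monomial ordering: for all α, β, γ, η ∈ ℕ^{I(n)}, if α ≺ β, then LE(z^γ z^α z^η) ≺ LE(z^γ z^β z^η). -/

import Mathlib

/-! Common setup: the standard quantized matrix algebra `M_q(n)` of
Faddeev–Reshetikhin–Takhtajan, defined as the quotient of the free
`K`-algebra on the `n²` generators `z_{ij}` by the two-sided ideal
generated by the relations R1–R4. -/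

/-- The generator `z_{ij}` of the free algebra on `Fin n × Fin n`. -/
noncomputable def freeGen (K : Type*) [Field K] (n : ℕ) (i j : Fin n) :
    FreeAlgebra K (Fin n × Fin n) :=
  FreeAlgebra.ι K (i, j)

/-- The defining relations R1–R4 of the standard quantized matrix algebra. -/
inductive QMRel (K : Type*) [Field K] (q : K) (n : ℕ) :
    FreeAlgebra K (Fin n × Fin n) → FreeAlgebra K (Fin n × Fin n) → Prop
  | r1 (i j k : Fin n) (h : j < k) :
      QMRel K q n (freeGen K n i j * freeGen K n i k)
        (q • (freeGen K n i k * freeGen K n i j))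
  | r2 (i j k : Fin n) (h : i < k) :
      QMRel K q n (freeGen K n i j * freeGen K n k j)
        (q • (freeGen K n k j * freeGen K n i j))
  | r3 (i j s t : Fin n) (h1 : i < s) (h2 : t < j) :
      QMRel K q n (freeGen K n i j * freeGen K n s t)
        (freeGen K n s t * freeGen K n i j)
  | r4 (i j s t : Fin n) (h1 : i < s) (h2 : j < t) :
      QMRel K q n (freeGen K n i j * freeGen K n s t)
        (freeGen K n s t * freeGen K n i j +
          (q - q⁻¹) • (freeGen K n i t * freeGen K n s j))

/-- The standard quantized matrix algebra `M_q(n)`: the quotient of the free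
algebra by the two-sided ideal generated by the relations R1–R4. -/
abbrev QuantumMatrix (K : Type*) [Field K] (q : K) (n : ℕ) :=
  RingQuot (QMRel K q n)

/-- The generator `z_{ij}` of `M_q(n)`. -/
noncomputable def Zgen (K : Type*) [Field K] (q : K) (n : ℕ) (i j : Fin n) :
    QuantumMatrix K q n :=
  RingQuot.mkAlgHom K (QMRel K q n) (freeGen K n i j)

/-- The order on the index set `I(n)`: `(k,l) < (i,j)` iff `k < i`, or
`k = i` and `l < j`. -/
def idxLt {n : ℕ} (p r : Fin n × Fin n) : Prop :=
  p.1 < r.1 ∨ (p.1 = r.1 ∧ p.2 < r.2)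

/-- The ordered monomial `z^α`: the product of the `z_{ij}^{α_{ij}}` taken
in decreasing order of the indices `(i,j)`, i.e.
`z_{nn}^{α_{nn}} z_{n,n-1}^{α_{n,n-1}} ⋯ z_{n1}^{α_{n1}} ⋯ z_{11}^{α_{11}}`. -/
noncomputable def zmon (K : Type*) [Field K] (q : K) {n : ℕ}
    (α : Fin n × Fin n → ℕ) : QuantumMatrix K q n :=
  ((List.finRange n).reverse.flatMap fun i =>
    (List.finRange n).reverse.map fun j => Zgen K q n i j ^ α (i, j)).prod

/-- The lexicographic order on exponent vectors: `α ≺ β` iff `α` is smaller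
than `β` at the largest index (w.r.t. the order on `I(n)`) at which they
differ. -/
def expLt {n : ℕ} (α β : Fin n × Fin n → ℕ) : Prop :=
  ∃ p : Fin n × Fin n, α p < β p ∧ ∀ r : Fin n × Fin n, idxLt p r → α r = β r

/-- The indicator exponent vector `ε_{ij}`. -/
def eps {n : ℕ} (i j : Fin n) : Fin n × Fin n → ℕ :=
  fun p => if p = (i, j) then 1 else 0

/-- `γ` is the leading exponent of `f` with respect to the order `lt`,
relative to the PBW basis `b` indexed by exponent vectors:
`γ` occurs with nonzero coefficient in the expansion of `f` and every other
exponent occurring in `f` is `lt`-smaller than `γ`. -/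
def IsLeadExpWrt {K : Type*} [Field K] {q : K} {n : ℕ}
    (lt : (Fin n × Fin n → ℕ) → (Fin n × Fin n → ℕ) → Prop)
    (b : Module.Basis (Fin n × Fin n → ℕ) K (QuantumMatrix K q n))
    (f : QuantumMatrix K q n) (γ : Fin n × Fin n → ℕ) : Prop :=
  b.repr f γ ≠ 0 ∧ ∀ δ, b.repr f δ ≠ 0 → δ = γ ∨ lt δ γ

/-- `γ` is the leading exponent of `f` w.r.t. the lexicographic order. -/
def IsLeadExp {K : Type*} [Field K] {q : K} {n : ℕ}
    (b : Module.Basis (Fin n × Fin n → ℕ) K (QuantumMatrix K q n))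
    (f : QuantumMatrix K q n) (γ : Fin n × Fin n → ℕ) : Prop :=
  IsLeadExpWrt expLt b f γ

section Order
variable {n : ℕ}

/-- rank of an index -/
def rankIdx {n : ℕ} (p : Fin n × Fin n) : ℕ := p.1.val * n + p.2.val

lemma rank_lt_rank {a c b d : ℕ} (hb : b < n) (hd : d < n) :
    (a < c ∨ (a = c ∧ b < d)) ↔ a * n + b < c * n + d := by
  constructor
  · rintro (h | ⟨rfl, h⟩)
    · calc a * n + b < a * n + n := by omega
        _ = (a + 1) * n := by ring
        _ ≤ c * n := Nat.mul_le_mul_right _ h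
        _ ≤ c * n + d := Nat.le_add_right _ _
    · omega
  · intro h
    rcases Nat.lt_trichotomy a c with h' | h' | h'
    · exact Or.inl h'
    · subst h'; exact Or.inr ⟨rfl, by omega⟩
    · exfalso
      have : c * n + d < a * n + b := calc
        c * n + d < c * n + n := by omega
        _ = (c + 1) * n := by ring
        _ ≤ a * n := Nat.mul_le_mul_right _ h'
        _ ≤ a * n + b := Nat.le_add_right _ _
      omega

lemma idxLt_iff_rank (p r : Fin n × Fin n) : idxLt p r ↔ rankIdx p < rankIdx r := by
  obtain ⟨⟨a, ha⟩, ⟨b, hb⟩⟩ := p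
  obtain ⟨⟨c, hc⟩, ⟨d, hd⟩⟩ := r
  simpa [idxLt, rankIdx, Fin.lt_def, Fin.ext_iff] using rank_lt_rank hb hd

lemma rankIdx_lt_sq (p : Fin n × Fin n) : rankIdx p < n * n := by
  obtain ⟨⟨a, ha⟩, ⟨b, hb⟩⟩ := p
  simp only [rankIdx]
  calc a * n + b < a * n + n := by omega
    _ = (a + 1) * n := by ring
    _ ≤ n * n := Nat.mul_le_mul_right _ ha

lemma rankIdx_inj {p r : Fin n × Fin n} (h : rankIdx p = rankIdx r) : p = r := by
  obtain ⟨⟨a, ha⟩, ⟨b, hb⟩⟩ := p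
  obtain ⟨⟨c, hc⟩, ⟨d, hd⟩⟩ := r
  simp only [rankIdx] at h
  have h1 : a = c ∧ b = d := by
    rcases Nat.lt_trichotomy a c with h' | h' | h'
    · exfalso; have := (rank_lt_rank hb hd).1 (Or.inl h'); omega
    · subst h'; exact ⟨rfl, by omega⟩
    · exfalso; have := (rank_lt_rank hd hb).1 (Or.inl h'); omega
  simp [Prod.ext_iff, Fin.ext_iff, h1.1, h1.2]

lemma idxLt_irrefl (p : Fin n × Fin n) : ¬ idxLt p p := by
  rw [idxLt_iff_rank]; omega

lemma idxLt_trans {p r s : Fin n × Fin n} (h1 : idxLt p r) (h2 : idxLt r s) : idxLt p s := by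
  rw [idxLt_iff_rank] at *; omega

lemma idxLt_connex {p r : Fin n × Fin n} (h : p ≠ r) : idxLt p r ∨ idxLt r p := by
  rw [idxLt_iff_rank, idxLt_iff_rank]
  rcases Nat.lt_trichotomy (rankIdx p) (rankIdx r) with h' | h' | h'
  · exact Or.inl h'
  · exact absurd (rankIdx_inj h') h
  · exact Or.inr h'

lemma expLt_irrefl (α : Fin n × Fin n → ℕ) : ¬ expLt α α := by
  rintro ⟨p, h, -⟩; omega

lemma expLt_trans {α β γ : Fin n × Fin n → ℕ} (h1 : expLt α β) (h2 : expLt β γ) :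
    expLt α γ := by
  obtain ⟨p, hp, hp'⟩ := h1
  obtain ⟨p', hq, hq'⟩ := h2
  by_cases hpp : p = p'
  · subst hpp
    exact ⟨p, hp.trans hq, fun r hr => (hp' r hr).trans (hq' r hr)⟩
  rcases idxLt_connex hpp with hlt | hlt
  · refine ⟨p', ?_, fun r hr => ?_⟩
    · rw [hp' p' hlt]; exact hq
    · exact (hp' r (idxLt_trans hlt hr)).trans (hq' r hr)
  · refine ⟨p, ?_, fun r hr => ?_⟩
    · rw [← hq' p hlt]; exact hp
    · exact (hp' r hr).trans (hq' r (idxLt_trans hlt hr))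

lemma expLt_asymm {α β : Fin n × Fin n → ℕ} (h1 : expLt α β) (h2 : expLt β α) : False :=
  expLt_irrefl α (expLt_trans h1 h2)

lemma expLt_add_right {α β : Fin n × Fin n → ℕ} (γ η : Fin n × Fin n → ℕ)
    (h : expLt α β) : expLt (fun p => γ p + α p + η p) (fun p => γ p + β p + η p) := by
  obtain ⟨p, hp, hp'⟩ := h
  refine ⟨p, ?_, fun r hr => ?_⟩
  · show γ p + α p + η p < γ p + β p + η p; omega
  · show γ r + α r + η r = γ r + β r + η r; rw [hp' r hr]

end Order
section Lists
variable {n : ℕ}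

/-- secondary measure -/
def mlist {n : ℕ} : List (Fin n × Fin n) → ℕ
  | [] => 0
  | _ :: t => mlist t + (t.map rankIdx).sum

lemma mlist_append (u w : List (Fin n × Fin n)) :
    mlist (u ++ w) = mlist u + mlist w + u.length * (w.map rankIdx).sum := by
  induction u with
  | nil => simp [mlist]
  | cons a u ih =>
    show mlist (u ++ w) + ((u ++ w).map rankIdx).sum = _
    rw [ih, List.map_append, List.sum_append]
    simp only [mlist, List.length_cons]
    ring

lemma mlist_swap (u v : List (Fin n × Fin n)) {a b : Fin n × Fin n}
    (h : rankIdx a < rankIdx b) :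
    mlist (u ++ b :: a :: v) < mlist (u ++ a :: b :: v) := by
  rw [mlist_append, mlist_append]
  have h1 : mlist (b :: a :: v) < mlist (a :: b :: v) := by
    simp only [mlist, List.map_cons, List.sum_cons]
    omega
  have h2 : ((b :: a :: v).map rankIdx).sum = ((a :: b :: v).map rankIdx).sum := by
    simp only [List.map_cons, List.sum_cons]; omega
  rw [h2]; omega

lemma ranksum_le (l : List (Fin n × Fin n)) : (l.map rankIdx).sum ≤ l.length * (n * n) := by
  induction l with
  | nil => simp
  | cons a t ih =>
    simp only [List.map_cons, List.sum_cons, List.length_cons]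
    have := rankIdx_lt_sq a
    nlinarith

lemma mlist_bound (l : List (Fin n × Fin n)) : mlist l ≤ l.length * l.length * (n * n) := by
  induction l with
  | nil => simp [mlist]
  | cons a t ih =>
    simp only [mlist, List.length_cons]
    have := ranksum_le t
    nlinarith

/-- sum of f over a list as a sum over all indices weighted by count -/
lemma map_sum_eq_count_sum (f : Fin n × Fin n → ℕ) (l : List (Fin n × Fin n)) :
    (l.map f).sum = ∑ p : Fin n × Fin n, l.count p * f p := by
  induction l with
  | nil => simp
  | cons a t ih =>
    simp only [List.map_cons, List.sum_cons, ih, List.count_cons]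
    have key : ∀ p : Fin n × Fin n, (t.count p + if (a == p) = true then 1 else 0) * f p
        = t.count p * f p + (if a = p then f p else 0) := by
      intro p; by_cases h : a = p <;> simp [h, add_mul]
    rw [Finset.sum_congr rfl fun p _ => key p, Finset.sum_add_distrib,
      Finset.sum_ite_eq Finset.univ a f]
    simp [add_comm]

lemma geom_aux (L : ℕ) : ∀ Kk : ℕ, L * ∑ k ∈ Finset.range Kk, (L + 1) ^ k < (L + 1) ^ Kk := by
  intro Kk
  induction Kk with
  | zero => simp
  | succ m ih =>
    rw [Finset.sum_range_succ, pow_succ]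
    nlinarith

/-- digit comparison: lex-smaller count vector with bounded entries has smaller base-(L+1) value -/
lemma digit_lt {L : ℕ} {c c' : Fin n × Fin n → ℕ}
    (hc : ∀ p, c p ≤ L) (hc' : ∀ p, c' p ≤ L)
    {p : Fin n × Fin n} (h1 : c' p < c p) (h2 : ∀ r, idxLt p r → c' r = c r) :
    ∑ r : Fin n × Fin n, c' r * (L + 1) ^ rankIdx r <
      ∑ r : Fin n × Fin n, c r * (L + 1) ^ rankIdx r := by
  set B := L + 1 with hB
  have split : ∀ d : Fin n × Fin n → ℕ,
      ∑ r : Fin n × Fin n, d r * B ^ rankIdx r =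
        (∑ r ∈ Finset.univ.filter (fun r => rankIdx r < rankIdx p), d r * B ^ rankIdx r)
        + d p * B ^ rankIdx p
        + ∑ r ∈ Finset.univ.filter (fun r => rankIdx p < rankIdx r), d r * B ^ rankIdx r := by
    intro d
    have hins : Finset.univ.filter (fun r : Fin n × Fin n => ¬ rankIdx r < rankIdx p) =
        insert p (Finset.univ.filter (fun r => rankIdx p < rankIdx r)) := by
      ext r
      simp only [Finset.mem_filter, Finset.mem_univ, true_and, Finset.mem_insert, not_lt]
      constructor
      · intro hr
        rcases Nat.lt_or_ge (rankIdx p) (rankIdx r) with h | h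
        · exact Or.inr h
        · exact Or.inl (rankIdx_inj (le_antisymm h hr))
      · rintro (rfl | hr) <;> omega
    rw [← Finset.sum_filter_add_sum_filter_not Finset.univ (fun r => rankIdx r < rankIdx p)
      (fun r => d r * B ^ rankIdx r), hins, Finset.sum_insert (by simp)]
    ring
  rw [split c, split c']
  have hhigh : ∑ r ∈ Finset.univ.filter (fun r => rankIdx p < rankIdx r), c' r * B ^ rankIdx r =
      ∑ r ∈ Finset.univ.filter (fun r => rankIdx p < rankIdx r), c r * B ^ rankIdx r := by
    refine Finset.sum_congr rfl fun r hr => ?_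
    rw [h2 r ((idxLt_iff_rank p r).2 (Finset.mem_filter.1 hr).2)]
  rw [hhigh]
  have hlow : ∑ r ∈ Finset.univ.filter (fun r => rankIdx r < rankIdx p), c' r * B ^ rankIdx r
      < B ^ rankIdx p := by
    calc ∑ r ∈ Finset.univ.filter (fun r => rankIdx r < rankIdx p), c' r * B ^ rankIdx r
        ≤ ∑ r ∈ Finset.univ.filter (fun r => rankIdx r < rankIdx p), L * B ^ rankIdx r := by
          exact Finset.sum_le_sum fun r _ => Nat.mul_le_mul_right _ (hc' r)
      _ = L * ∑ r ∈ Finset.univ.filter (fun r => rankIdx r < rankIdx p), B ^ rankIdx r := by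
          rw [Finset.mul_sum]
      _ = L * ∑ k ∈ Finset.image rankIdx
            (Finset.univ.filter (fun r => rankIdx r < rankIdx p)), B ^ k := by
          rw [Finset.sum_image (fun x _ y _ h => rankIdx_inj h)]
      _ ≤ L * ∑ k ∈ Finset.range (rankIdx p), B ^ k := by
          refine Nat.mul_le_mul_left _ (Finset.sum_le_sum_of_subset ?_)
          intro k hk
          simp only [Finset.mem_image, Finset.mem_filter, Finset.mem_univ, true_and] at hk
          obtain ⟨r, hr, rfl⟩ := hk
          exact Finset.mem_range.2 hr
      _ < B ^ rankIdx p := geom_aux L _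
  have hle : ∑ r ∈ Finset.univ.filter (fun r => rankIdx r < rankIdx p),
      c r * B ^ rankIdx r ≥ 0 := Nat.zero_le _
  have hstep : c' p * B ^ rankIdx p + B ^ rankIdx p ≤ c p * B ^ rankIdx p := by
    have h3 : (c' p + 1) * B ^ rankIdx p ≤ c p * B ^ rankIdx p :=
      Nat.mul_le_mul_right _ h1
    have h4 : (c' p + 1) * B ^ rankIdx p = c' p * B ^ rankIdx p + B ^ rankIdx p := by ring
    omega
  omega

end Lists
section Sorting
variable {n : ℕ}

/-- the non-strict reverse order used for sortedness of monomial words -/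
abbrev idxGe {n : ℕ} (a b : Fin n × Fin n) : Prop := ¬ idxLt a b

lemma find_bad_pair {l : List (Fin n × Fin n)} (h : ¬ l.Pairwise idxGe) :
    ∃ u a b v, l = u ++ a :: b :: v ∧ idxLt a b := by
  haveI : IsTrans (Fin n × Fin n) idxGe := ⟨by
    intro a b c hab hbc habc
    rcases idxLt_connex (fun he : a = b => hbc (he ▸ habc)) with h1 | h1
    · exact hab h1
    · exact hbc (idxLt_trans h1 habc)⟩
  rw [← List.isChain_iff_pairwise] at h
  clear * - h
  induction l with
  | nil => exact absurd List.isChain_nil h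
  | cons a t ih =>
    cases t with
    | nil => exact absurd (List.isChain_singleton a) h
    | cons b v =>
      rw [List.isChain_cons_cons] at h
      by_cases hab : idxLt a b
      · exact ⟨[], a, b, v, rfl, hab⟩
      · have hc : ¬ List.IsChain idxGe (b :: v) := fun hc => h ⟨hab, hc⟩
        obtain ⟨u, x, y, w, heq, hxy⟩ := ih hc
        exact ⟨a :: u, x, y, w, by rw [heq]; rfl, hxy⟩

/-- the canonical sorted word with exponent vector δ -/
def Wd {n : ℕ} (δ : Fin n × Fin n → ℕ) : List (Fin n × Fin n) :=
  (List.finRange n).reverse.flatMap fun i =>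
    (List.finRange n).reverse.flatMap fun j => List.replicate (δ (i, j)) (i, j)

lemma count_Wd [BEq (Fin n × Fin n)] [LawfulBEq (Fin n × Fin n)] (δ : Fin n × Fin n → ℕ) (p : Fin n × Fin n) :
    (Wd δ).count p = δ p := by
  obtain ⟨a, b⟩ := p
  rw [Wd, List.count_flatMap]
  have inner : ∀ i : Fin n,
      (((List.finRange n).reverse.flatMap fun j => List.replicate (δ (i, j)) (i, j)).count (a, b))
        = if i = a then δ (a, b) else 0 := by
    intro i
    rw [List.count_flatMap]
    have : ∀ j : Fin n, ((List.replicate (δ (i, j)) (i, j)).count ((a : Fin n), b))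
        = if i = a ∧ j = b then δ (i, j) else 0 := by
      intro j
      rw [List.count_replicate]
      by_cases h : i = a ∧ j = b
      · obtain ⟨rfl, rfl⟩ := h
        simp
      · have h' : ¬ ((i, j) = ((a : Fin n), b)) := by simpa [Prod.ext_iff] using h
        simp [h, h']
    calc ((List.finRange n).reverse.map
          (fun j => ((List.replicate (δ (i, j)) (i, j)).count ((a : Fin n), b)))).sum
        = ((List.finRange n).reverse.map (fun j => if i = a ∧ j = b then δ (i, j) else 0)).sum := by
          exact congrArg List.sum (List.map_congr_left fun j _ => this j)
      _ = ∑ j : Fin n, if i = a ∧ j = b then δ (i, j) else 0 := by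
          rw [List.map_reverse, List.sum_reverse, ← Fin.sum_univ_def]
      _ = if i = a then δ (a, b) else 0 := by
          by_cases h : i = a
          · subst h
            simp only [true_and]
            rw [Finset.sum_ite_eq' Finset.univ b fun j => δ (i, j)]
            simp
          · simp [h]
    
  calc ((List.finRange n).reverse.map ((fun x => List.count (a,b) x) ∘
        (fun i => (List.finRange n).reverse.flatMap fun j => List.replicate (δ (i, j)) (i, j)))).sum
      = ((List.finRange n).reverse.map (fun i => if i = a then δ (a, b) else 0)).sum := by
        exact congrArg List.sum (List.map_congr_left fun i _ => inner i)
    _ = ∑ i : Fin n, if i = a then δ (a, b) else 0 := by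
        rw [List.map_reverse, List.sum_reverse, ← Fin.sum_univ_def]
    _ = δ (a, b) := by rw [Finset.sum_ite_eq' Finset.univ a fun _ => δ (a, b)]; simp

lemma mem_inner_Wd {δ : Fin n × Fin n → ℕ} {i : Fin n} {x : Fin n × Fin n}
    (hx : x ∈ (List.finRange n).reverse.flatMap fun j => List.replicate (δ (i, j)) (i, j)) :
    x.1 = i := by
  rw [List.mem_flatMap] at hx
  obtain ⟨j, -, hj⟩ := hx
  rw [List.eq_of_mem_replicate hj]

lemma Wd_sorted (δ : Fin n × Fin n → ℕ) : (Wd δ).Pairwise idxGe := by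
  rw [Wd, List.pairwise_flatMap]
  constructor
  · intro i _
    rw [List.pairwise_flatMap]
    constructor
    · intro j _
      rw [List.pairwise_replicate]
      exact Or.inr (idxLt_irrefl _)
    · rw [List.pairwise_reverse]
      refine List.Pairwise.imp_of_mem ?_ (List.pairwise_lt_finRange n)
      intro j1 j2 _ _ hlt x hx y hy hxy
      rw [List.eq_of_mem_replicate hx, List.eq_of_mem_replicate hy] at hxy
      rcases hxy with h | ⟨-, h⟩
      · exact lt_irrefl _ h
      · exact absurd (h.trans hlt) (lt_irrefl _)
  · rw [List.pairwise_reverse]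
    refine List.Pairwise.imp_of_mem ?_ (List.pairwise_lt_finRange n)
    intro i1 i2 _ _ hlt x hx y hy hxy
    obtain ⟨x1, x2⟩ := x
    obtain ⟨y1, y2⟩ := y
    have hx1 : x1 = i2 := mem_inner_Wd hx
    have hy1 : y1 = i1 := mem_inner_Wd hy
    subst hx1; subst hy1
    rcases hxy with h | ⟨h, -⟩
    · exact absurd ((show x1 < y1 from h).trans hlt) (lt_irrefl _)
    · rw [show x1 = y1 from h] at hlt; exact lt_irrefl _ hlt

lemma count_deq {n : ℕ} (a : Fin n × Fin n) (l' : List (Fin n × Fin n)) :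
    @List.count _ instBEqOfDecidableEq a l' = List.count a l' := by
  induction l' with
  | nil => rfl
  | cons b t ih =>
    rw [@List.count_cons _ instBEqOfDecidableEq, List.count_cons, ih]
    have e1 : (@BEq.beq _ instBEqOfDecidableEq b a) = true ↔ b = a := by
      show decide (b = a) = true ↔ b = a
      simp
    have e2 : (b == a) = true ↔ b = a := beq_iff_eq
    by_cases hba : b = a
    · rw [if_pos (e1.mpr hba), if_pos (e2.mpr hba)]
    · rw [if_neg (fun hh => hba (e1.mp hh)), if_neg (fun hh => hba (e2.mp hh))]

lemma sorted_eq_Wd {l : List (Fin n × Fin n)} (h : l.Pairwise idxGe) :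
    l = Wd (fun p => l.count p) := by
  haveI : IsAntisymm (Fin n × Fin n) idxGe := ⟨by
    intro a b hab hba
    by_contra hne
    rcases idxLt_connex hne with h1 | h1
    · exact hab h1
    · exact hba h1⟩
  refine List.Perm.eq_of_pairwise' h (Wd_sorted _) ?_
  rw [List.perm_iff_count]
  intro p
  exact (count_Wd (fun p => List.count p l) p).symm

end Sorting
section Algebra
variable (K : Type*) [Field K] (q : K) {n : ℕ}

/-- the product of the generators along a word -/
noncomputable def wprod (l : List (Fin n × Fin n)) : QuantumMatrix K q n :=
  (l.map fun p => Zgen K q n p.1 p.2).prod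

lemma wprod_append (u v : List (Fin n × Fin n)) :
    wprod K q (u ++ v) = wprod K q u * wprod K q v := by
  rw [wprod, List.map_append, List.prod_append]; rfl

lemma wprod_cons (a : Fin n × Fin n) (v : List (Fin n × Fin n)) :
    wprod K q (a :: v) = Zgen K q n a.1 a.2 * wprod K q v := by
  rw [wprod, List.map_cons, List.prod_cons]; rfl

lemma zrel1 (i j k : Fin n) (h : j < k) :
    Zgen K q n i j * Zgen K q n i k = q • (Zgen K q n i k * Zgen K q n i j) := by
  have := RingQuot.mkAlgHom_rel K (QMRel.r1 (K := K) (q := q) i j k h)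
  simpa only [Zgen, map_mul, map_smul] using this

lemma zrel2 (i j k : Fin n) (h : i < k) :
    Zgen K q n i j * Zgen K q n k j = q • (Zgen K q n k j * Zgen K q n i j) := by
  have := RingQuot.mkAlgHom_rel K (QMRel.r2 (K := K) (q := q) i j k h)
  simpa only [Zgen, map_mul, map_smul] using this

lemma zrel3 (i j s t : Fin n) (h1 : i < s) (h2 : t < j) :
    Zgen K q n i j * Zgen K q n s t = Zgen K q n s t * Zgen K q n i j := by
  have := RingQuot.mkAlgHom_rel K (QMRel.r3 (K := K) (q := q) i j s t h1 h2)
  simpa only [Zgen, map_mul] using this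

lemma zrel4 (i j s t : Fin n) (h1 : i < s) (h2 : j < t) :
    Zgen K q n i j * Zgen K q n s t = Zgen K q n s t * Zgen K q n i j +
      (q - q⁻¹) • (Zgen K q n i t * Zgen K q n s j) := by
  have := RingQuot.mkAlgHom_rel K (QMRel.r4 (K := K) (q := q) i j s t h1 h2)
  simpa only [Zgen, map_mul, map_add, map_smul] using this

lemma prod_flatMap' {M : Type*} [Monoid M] {α : Type*} (l : List α) (F : α → List M) :
    (l.flatMap F).prod = (l.map fun i => (F i).prod).prod := by
  rw [List.flatMap_def, List.prod_flatten, List.map_map]; rfl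

lemma wprod_Wd (δ : Fin n × Fin n → ℕ) : wprod K q (Wd δ) = zmon K q δ := by
  rw [wprod, Wd, zmon, List.map_flatMap, prod_flatMap', prod_flatMap']
  refine congrArg List.prod (List.map_congr_left fun i _ => ?_)
  rw [List.map_flatMap, prod_flatMap']
  refine congrArg List.prod (List.map_congr_left fun j _ => ?_)
  rw [List.map_replicate, List.prod_replicate]

/-- the span of the monomials with exponent lexicographically below θ -/
noncomputable def LowSpan (θ : Fin n × Fin n → ℕ) : Submodule K (QuantumMatrix K q n) :=
  Submodule.span K (zmon K q '' {ε | expLt ε θ})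

lemma LowSpan_mono {θ θ' : Fin n × Fin n → ℕ} (h : expLt θ θ') :
    LowSpan K q θ ≤ LowSpan K q θ' := by
  refine Submodule.span_mono ?_
  rintro x ⟨ε, hε, rfl⟩
  exact ⟨ε, expLt_trans hε h, rfl⟩

lemma zmon_mem_LowSpan {θ θ' : Fin n × Fin n → ℕ} (h : expLt θ θ') :
    zmon K q θ ∈ LowSpan K q θ' :=
  Submodule.subset_span ⟨θ, h, rfl⟩

/-- measure for the straightening induction -/
def muL {n : ℕ} (l : List (Fin n × Fin n)) : ℕ :=
  (l.map fun x => (l.length + 1) ^ rankIdx x).sum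

def nuM {n : ℕ} (l : List (Fin n × Fin n)) : ℕ :=
  muL l * (l.length * l.length * (n * n) + 1) + mlist l

lemma muL_perm {l₁ l₂ : List (Fin n × Fin n)} (h : l₁.Perm l₂) : muL l₁ = muL l₂ := by
  rw [muL, muL, h.length_eq]
  exact (h.map _).sum_eq

lemma muL_lt {l l' : List (Fin n × Fin n)} (hlen : l'.length = l.length)
    {p : Fin n × Fin n} (h1 : l'.count p < l.count p)
    (h2 : ∀ r, idxLt p r → l'.count r = l.count r) : muL l' < muL l := by
  rw [muL, muL, hlen, map_sum_eq_count_sum, map_sum_eq_count_sum]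
  exact digit_lt (fun p => List.count_le_length (a := p) (l := l))
    (fun p => hlen ▸ List.count_le_length (a := p) (l := l')) h1 h2

lemma straighten (hq : q ≠ 0) :
    ∀ (N : ℕ) (l : List (Fin n × Fin n)), nuM l ≤ N →
      ∃ (c : K) (g : QuantumMatrix K q n), c ≠ 0 ∧
        g ∈ LowSpan K q (fun p => l.count p) ∧
        wprod K q l = c • zmon K q (fun p => l.count p) + g := by
  intro N
  induction N using Nat.strong_induction_on with
  | _ N IH =>
  intro l hl
  by_cases hs : l.Pairwise idxGe
  · refine ⟨1, 0, one_ne_zero, Submodule.zero_mem _, ?_⟩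
    rw [one_smul, add_zero]
    conv_lhs => rw [sorted_eq_Wd hs]
    exact wprod_Wd K q _
  obtain ⟨u, a, b, v, rfl, hab⟩ := find_bad_pair hs
  obtain ⟨ai, aj⟩ := a
  obtain ⟨bi, bj⟩ := b
  have hrank : rankIdx ((ai, aj) : Fin n × Fin n) < rankIdx ((bi, bj) : Fin n × Fin n) :=
    (idxLt_iff_rank _ _).1 hab
  have hperm : (u ++ (bi, bj) :: (ai, aj) :: v).Perm (u ++ (ai, aj) :: (bi, bj) :: v) :=
    List.Perm.append_left u (List.Perm.swap _ _ v)
  have hnu1 : nuM (u ++ (bi, bj) :: (ai, aj) :: v) < nuM (u ++ (ai, aj) :: (bi, bj) :: v) := by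
    have hm : mlist (u ++ (bi, bj) :: (ai, aj) :: v) < mlist (u ++ (ai, aj) :: (bi, bj) :: v) :=
      mlist_swap u v hrank
    have hmu : muL (u ++ (bi, bj) :: (ai, aj) :: v) = muL (u ++ (ai, aj) :: (bi, bj) :: v) :=
      muL_perm hperm
    rw [nuM, nuM, hmu, hperm.length_eq]
    omega
  obtain ⟨c1, g1, hc1, hg1, he1⟩ :=
    IH (nuM (u ++ (bi, bj) :: (ai, aj) :: v)) (lt_of_lt_of_le hnu1 hl) _ le_rfl
  have hcnt1 : (fun p => (u ++ (bi, bj) :: (ai, aj) :: v).count p)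
      = fun p => (u ++ (ai, aj) :: (bi, bj) :: v).count p := by
    funext p
    exact hperm.count_eq p
  rw [hcnt1] at hg1 he1
  have hmid : ∀ x y : Fin n × Fin n, wprod K q (u ++ x :: y :: v)
      = wprod K q u * (Zgen K q n x.1 x.2 * Zgen K q n y.1 y.2) * wprod K q v := by
    intro x y
    rw [wprod_append, wprod_cons, wprod_cons]
    simp [mul_assoc]
  have main1 : ∀ s : K, s ≠ 0 →
      wprod K q (u ++ (ai, aj) :: (bi, bj) :: v) = s • wprod K q (u ++ (bi, bj) :: (ai, aj) :: v) →
      ∃ (c : K) (g : QuantumMatrix K q n), c ≠ 0 ∧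
        g ∈ LowSpan K q (fun p => (u ++ (ai, aj) :: (bi, bj) :: v).count p) ∧
        wprod K q (u ++ (ai, aj) :: (bi, bj) :: v)
          = c • zmon K q (fun p => (u ++ (ai, aj) :: (bi, bj) :: v).count p) + g := by
    intro s hs hw
    refine ⟨s * c1, s • g1, mul_ne_zero hs hc1, Submodule.smul_mem _ _ hg1, ?_⟩
    rw [hw, he1, smul_add, smul_smul]
  rcases hab with hi | ⟨he, hj⟩
  · -- ai < bi
    rcases lt_trichotomy aj bj with hj | hj | hj
    · -- R4 case
      have hlen2 : (u ++ (ai, bj) :: (bi, aj) :: v).length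
          = (u ++ (ai, aj) :: (bi, bj) :: v).length := by simp
      -- counts of l2 are lexicographically smaller, witness (bi, bj)
      have hne1 : ((ai, bj) : Fin n × Fin n) ≠ (bi, bj) := by
        intro hh; exact absurd (Prod.ext_iff.1 hh).1 (ne_of_lt hi)
      have hne2 : ((bi, aj) : Fin n × Fin n) ≠ (bi, bj) := by
        intro hh; exact absurd (Prod.ext_iff.1 hh).2 (ne_of_lt hj)
      have hne3 : ((ai, aj) : Fin n × Fin n) ≠ (bi, bj) := by
        intro hh; exact absurd (Prod.ext_iff.1 hh).1 (ne_of_lt hi)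
      have hcb : (u ++ (ai, bj) :: (bi, aj) :: v).count ((bi, bj) : Fin n × Fin n)
          < (u ++ (ai, aj) :: (bi, bj) :: v).count ((bi, bj) : Fin n × Fin n) := by
        simp [List.count_append, List.count_cons, hne1, hne2, hne3]
      have h4 : rankIdx ((ai, bj) : Fin n × Fin n) < rankIdx ((bi, bj) : Fin n × Fin n) :=
        (idxLt_iff_rank _ _).1 (Or.inl hi)
      have h5 : rankIdx ((bi, aj) : Fin n × Fin n) < rankIdx ((bi, bj) : Fin n × Fin n) :=
        (idxLt_iff_rank _ _).1 (Or.inr ⟨rfl, hj⟩)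
      have hcr : ∀ r : Fin n × Fin n, idxLt ((bi, bj) : Fin n × Fin n) r →
          (u ++ (ai, bj) :: (bi, aj) :: v).count r = (u ++ (ai, aj) :: (bi, bj) :: v).count r := by
        intro r hr
        have hbr := (idxLt_iff_rank _ _).1 hr
        have hra : ((ai, aj) : Fin n × Fin n) ≠ r := by
          intro hh; rw [← hh] at hbr; omega
        have hrb : ((bi, bj) : Fin n × Fin n) ≠ r := by
          intro hh; rw [← hh] at hbr; omega
        have hr1 : ((ai, bj) : Fin n × Fin n) ≠ r := by
          intro hh; rw [← hh] at hbr; omega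
        have hr2 : ((bi, aj) : Fin n × Fin n) ≠ r := by
          intro hh; rw [← hh] at hbr; omega
        simp [List.count_append, List.count_cons, hra, hrb, hr1, hr2]
      have hcnt2 : expLt (fun p => (u ++ (ai, bj) :: (bi, aj) :: v).count p)
          (fun p => (u ++ (ai, aj) :: (bi, bj) :: v).count p) := ⟨(bi, bj), hcb, hcr⟩
      have hmu2 : muL (u ++ (ai, bj) :: (bi, aj) :: v) < muL (u ++ (ai, aj) :: (bi, bj) :: v) :=
        muL_lt hlen2 hcb hcr
      have hnu2 : nuM (u ++ (ai, bj) :: (bi, aj) :: v) < nuM (u ++ (ai, aj) :: (bi, bj) :: v) := by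
        rw [nuM, nuM, hlen2]
        have hml := mlist_bound (u ++ (ai, bj) :: (bi, aj) :: v)
        rw [hlen2] at hml
        set C := (u ++ (ai, aj) :: (bi, bj) :: v).length *
          (u ++ (ai, aj) :: (bi, bj) :: v).length * (n * n) + 1 with hC
        have s2 : muL (u ++ (ai, bj) :: (bi, aj) :: v) * C + C
            = (muL (u ++ (ai, bj) :: (bi, aj) :: v) + 1) * C := by ring
        have s3 : (muL (u ++ (ai, bj) :: (bi, aj) :: v) + 1) * C
            ≤ muL (u ++ (ai, aj) :: (bi, bj) :: v) * C :=
          Nat.mul_le_mul_right _ (by omega)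
        omega
      obtain ⟨c2, g2, hc2, hg2, he2⟩ :=
        IH (nuM (u ++ (ai, bj) :: (bi, aj) :: v)) (lt_of_lt_of_le hnu2 hl) _ le_rfl
      have hw4 : wprod K q (u ++ (ai, aj) :: (bi, bj) :: v)
          = wprod K q (u ++ (bi, bj) :: (ai, aj) :: v)
            + (q - q⁻¹) • wprod K q (u ++ (ai, bj) :: (bi, aj) :: v) := by
        rw [hmid ((ai, aj) : Fin n × Fin n) ((bi, bj) : Fin n × Fin n),
          hmid ((bi, bj) : Fin n × Fin n) ((ai, aj) : Fin n × Fin n),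
          hmid ((ai, bj) : Fin n × Fin n) ((bi, aj) : Fin n × Fin n)]
        rw [zrel4 K q ai aj bi bj hi hj]
        rw [mul_add, add_mul, mul_smul_comm, smul_mul_assoc]
      refine ⟨c1, g1 + (q - q⁻¹) • (c2 • zmon K q
        (fun p => (u ++ (ai, bj) :: (bi, aj) :: v).count p) + g2), hc1, ?_, ?_⟩
      · refine Submodule.add_mem _ hg1 (Submodule.smul_mem _ _ (Submodule.add_mem _ ?_ ?_))
        · exact Submodule.smul_mem _ _ (zmon_mem_LowSpan K q hcnt2)
        · exact LowSpan_mono K q hcnt2 hg2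
      · rw [hw4, he1, he2, add_assoc]
    · -- R2 case : aj = bj
      subst hj
      refine main1 q hq ?_
      rw [hmid, hmid]
      rw [show Zgen K q n ((ai, aj) : Fin n × Fin n).1 ((ai, aj) : Fin n × Fin n).2 *
            Zgen K q n ((bi, aj) : Fin n × Fin n).1 ((bi, aj) : Fin n × Fin n).2
          = q • (Zgen K q n ((bi, aj) : Fin n × Fin n).1 ((bi, aj) : Fin n × Fin n).2 *
            Zgen K q n ((ai, aj) : Fin n × Fin n).1 ((ai, aj) : Fin n × Fin n).2)
          from zrel2 K q ai aj bi hi]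
      rw [mul_smul_comm, smul_mul_assoc]
    · -- R3 case : bj < aj
      refine main1 1 one_ne_zero ?_
      rw [one_smul, hmid, hmid]
      rw [show Zgen K q n ai aj * Zgen K q n bi bj = Zgen K q n bi bj * Zgen K q n ai aj
          from zrel3 K q ai aj bi bj hi hj]
  · -- R1 case : ai = bi, aj < bj
    subst he
    refine main1 q hq ?_
    rw [hmid, hmid]
    rw [show Zgen K q n ai aj * Zgen K q n ai bj = q • (Zgen K q n ai bj * Zgen K q n ai aj)
        from zrel1 K q ai aj bj hj]
    rw [mul_smul_comm, smul_mul_assoc]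

end Algebra
section Final
variable {K : Type*} [Field K] {q : K} {n : ℕ}

lemma repr_LowSpan (b : Module.Basis (Fin n × Fin n → ℕ) K (QuantumMatrix K q n))
    (hb : ∀ α, b α = zmon K q α) (θ : Fin n × Fin n → ℕ)
    {g : QuantumMatrix K q n} (hg : g ∈ LowSpan K q θ) :
    ∀ δ, b.repr g δ ≠ 0 → expLt δ θ := by
  refine Submodule.span_induction ?_ ?_ ?_ ?_ hg
  · rintro x ⟨ε, hε, rfl⟩ δ hδ
    rw [← hb ε, b.repr_self] at hδ
    rw [Finsupp.single_apply] at hδ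
    by_cases h : ε = δ
    · exact h ▸ hε
    · simp [h] at hδ
  · intro δ hδ
    simp at hδ
  · intro x y _ _ hx hy δ hδ
    rw [map_add, Finsupp.add_apply] at hδ
    by_cases h : b.repr x δ = 0
    · exact hy δ (by intro hh; rw [h, hh] at hδ; simp at hδ)
    · exact hx δ h
  · intro c x _ hx δ hδ
    rw [map_smul, Finsupp.smul_apply] at hδ
    exact hx δ fun hh => hδ (by rw [hh, smul_zero])

lemma isLeadExp_of (b : Module.Basis (Fin n × Fin n → ℕ) K (QuantumMatrix K q n))
    (hb : ∀ α, b α = zmon K q α) (θ : Fin n × Fin n → ℕ) {c : K} (hc : c ≠ 0)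
    {g f : QuantumMatrix K q n} (hg : g ∈ LowSpan K q θ)
    (hf : f = c • zmon K q θ + g) : IsLeadExp b f θ := by
  have hgs := repr_LowSpan b hb θ hg
  have hr : b.repr f = c • Finsupp.single θ 1 + b.repr g := by
    rw [hf, map_add, map_smul, ← hb, b.repr_self]
  have hgθ : b.repr g θ = 0 := by
    by_contra hh
    exact expLt_irrefl θ (hgs θ hh)
  constructor
  · rw [hr]
    simp [Finsupp.single_apply, hgθ, hc]
  · intro δ hδ
    by_cases h : δ = θ
    · exact Or.inl h
    · refine Or.inr (hgs δ ?_)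
      rw [hr] at hδ
      simp only [Finsupp.add_apply, Finsupp.smul_apply, Finsupp.single_apply] at hδ
      rw [if_neg (fun hh => h hh.symm)] at hδ
      simpa using hδ

lemma isLeadExp_unique (b : Module.Basis (Fin n × Fin n → ℕ) K (QuantumMatrix K q n))
    {f : QuantumMatrix K q n} {x y : Fin n × Fin n → ℕ}
    (hx : IsLeadExp b f x) (hy : IsLeadExp b f y) : x = y := by
  rcases hy.2 x hx.1 with h | h
  · exact h
  rcases hx.2 y hy.1 with h' | h'
  · exact h'.symm
  · exact absurd (expLt_trans h h') (expLt_irrefl _)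

lemma zmon_triple (hq : q ≠ 0) (γ δ η : Fin n × Fin n → ℕ) :
    ∃ (c : K) (g : QuantumMatrix K q n), c ≠ 0 ∧
      g ∈ LowSpan K q (fun p => γ p + δ p + η p) ∧
      zmon K q γ * zmon K q δ * zmon K q η
        = c • zmon K q (fun p => γ p + δ p + η p) + g := by
  obtain ⟨c, g, hc, hg, he⟩ := straighten K q hq
    (nuM (Wd γ ++ Wd δ ++ Wd η)) (Wd γ ++ Wd δ ++ Wd η) le_rfl
  have hcnt : (fun p => (Wd γ ++ Wd δ ++ Wd η).count p) = fun p => γ p + δ p + η p := by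
    funext p
    rw [List.count_append, List.count_append, count_Wd, count_Wd, count_Wd]
  rw [hcnt] at hg he
  rw [wprod_append, wprod_append, wprod_Wd, wprod_Wd, wprod_Wd] at he
  exact ⟨c, g, hc, hg, he⟩

end Final

/-- the lexicographic order satisfies condition (3) of the
definition of a monomial ordering: if `α ≺ β` then
`LE(z^γ z^α z^η) ≺ LE(z^γ z^β z^η)`. -/
theorem expLt_monomial_ordering_cond3 (K : Type*) [Field K] [CharZero K]
    (q : K) (hq : q ≠ 0) (n : ℕ) (hn : 2 ≤ n)
    (b : Module.Basis (Fin n × Fin n → ℕ) K (QuantumMatrix K q n))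
    (hb : ∀ α, b α = zmon K q α)
    (α β γ η : Fin n × Fin n → ℕ) (h : expLt α β) :
    ∀ γ₁ γ₂, IsLeadExp b (zmon K q γ * zmon K q α * zmon K q η) γ₁ →
      IsLeadExp b (zmon K q γ * zmon K q β * zmon K q η) γ₂ → expLt γ₁ γ₂ := by
  intro γ₁ γ₂ h1 h2
  obtain ⟨cα, gα, hcα, hgα, heα⟩ := zmon_triple hq γ α η
  obtain ⟨cβ, gβ, hcβ, hgβ, heβ⟩ := zmon_triple hq γ β η
  have k1 : IsLeadExp b (zmon K q γ * zmon K q α * zmon K q η) (fun p => γ p + α p + η p) :=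
    isLeadExp_of b hb _ hcα hgα heα
  have k2 : IsLeadExp b (zmon K q γ * zmon K q β * zmon K q η) (fun p => γ p + β p + η p) :=
    isLeadExp_of b hb _ hcβ hgβ heβ
  rw [isLeadExp_unique b h1 k1, isLeadExp_unique b h2 k2]
  exact expLt_add_right γ η h
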